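/- Let Ω ⊂ ℝ^N be a bounded domain with defining function ρ of class C² such that the Hessian of ρ is positive definite on the full tangent space T_p ∂Ω for every p ∈ ∂Ω (strong convexity). Then Ω is strictly convex: for any two distinct points a, b ∈ Ω̄, the open segment { (1−t)a + t b : 0 < t < 1 } is contained in Ω. -/

import Mathlib

open Set

/-- Key analytic lemma: if `ρ ≤ 0` along a segment and some interior point of the
segment lies on the frontier of `Ω`, then the strong convexity hypothesis yields a
contradiction. -/
private lemma key_no_frontier_touch {N : ℕ}
    {Ω : Set (EuclideanSpace ℝ (Fin N))}
    {ρ : EuclideanSpace ℝ (Fin N) → ℝ} (hρ : ContDiff ℝ 2 ρ)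
    (hΩdef : Ω = { x | ρ x < 0 })
    (hhess : ∀ p ∈ frontier Ω, ∀ v : EuclideanSpace ℝ (Fin N), v ≠ 0 →
      fderiv ℝ ρ p v = 0 → 0 < iteratedFDeriv ℝ 2 ρ p ![v, v])
    {a b : EuclideanSpace ℝ (Fin N)} (hab : a ≠ b)
    {t : ℝ} (ht0 : 0 < t) (ht1 : t < 1)
    (hseg : ∀ s ∈ Icc (0:ℝ) 1, ρ ((1 - s) • a + s • b) ≤ 0)
    (hfr : ((1 - t) • a + t • b) ∈ frontier Ω) : False := by
  set v : EuclideanSpace ℝ (Fin N) := b - a with hv_def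
  have hv : v ≠ 0 := sub_ne_zero.2 (Ne.symm hab)
  set c : ℝ → EuclideanSpace ℝ (Fin N) := fun s => (1 - s) • a + s • b with hc_def
  set p : EuclideanSpace ℝ (Fin N) := c t with hp_def
  have hρd : Differentiable ℝ ρ := hρ.differentiable (by norm_num)
  have hD : ContDiff ℝ 1 (fderiv ℝ ρ) := hρ.fderiv_right (by norm_num)
  have hDd : Differentiable ℝ (fderiv ℝ ρ) := hD.differentiable one_ne_zero
  -- derivative of the segment parametrization
  have hc : ∀ s : ℝ, HasDerivAt c v s := by
    intro s
    have h1 : HasDerivAt (fun s : ℝ => (1 - s) • a) ((-1 : ℝ) • a) s := by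
      have : HasDerivAt (fun s : ℝ => 1 - s) (-1) s := by
        simpa using (hasDerivAt_id s).const_sub 1
      exact this.smul_const a
    have h2 : HasDerivAt (fun s : ℝ => s • b) ((1 : ℝ) • b) s :=
      (hasDerivAt_id s).smul_const b
    have heq : (-1 : ℝ) • a + (1 : ℝ) • b = v := by
      simp only [hv_def, neg_smul, one_smul]; abel
    rw [← heq]
    exact h1.add h2
  set g : ℝ → ℝ := fun s => ρ (c s) with hg_def
  set g' : ℝ → ℝ := fun s => fderiv ℝ ρ (c s) v with hg'_def
  set g'' : ℝ → ℝ := fun s => fderiv ℝ (fderiv ℝ ρ) (c s) v v with hg''_def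
  have hg : ∀ s : ℝ, HasDerivAt g (g' s) s := fun s =>
    (hρd (c s)).hasFDerivAt.comp_hasDerivAt s (hc s)
  have hg' : ∀ s : ℝ, HasDerivAt g' (g'' s) s := by
    intro s
    have h1 : HasDerivAt (fun u => fderiv ℝ ρ (c u)) (fderiv ℝ (fderiv ℝ ρ) (c s) v) s :=
      (hDd (c s)).hasFDerivAt.comp_hasDerivAt s (hc s)
    have h2 : HasDerivAt (fun _ : ℝ => v) (0 : EuclideanSpace ℝ (Fin N)) s := hasDerivAt_const s v
    have h := h1.clm_apply h2
    simpa [hg'_def, hg''_def] using h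
  -- `ρ` vanishes at `p`
  have hpΩ : p ∉ Ω := by
    have hopen : IsOpen Ω := by
      rw [hΩdef]; exact isOpen_lt hρ.continuous continuous_const
    intro hp
    exact (disjoint_frontier_iff_isOpen.2 hopen).le_bot ⟨hfr, hp⟩ |>.elim
  have hgt : g t = 0 := by
    have h1 : g t ≤ 0 := hseg t ⟨le_of_lt ht0, le_of_lt ht1⟩
    have h2 : ¬ ρ p < 0 := fun h => hpΩ (hΩdef ▸ h)
    have : ¬ g t < 0 := h2
    linarith
  -- `t` is a local max of `g`, so `g' t = 0`
  have hmax : IsLocalMax g t := by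
    filter_upwards [Ioo_mem_nhds ht0 ht1] with s hs
    rw [hgt]
    exact hseg s ⟨le_of_lt hs.1, le_of_lt hs.2⟩
  have h0 : g' t = 0 := by
    have := hmax.deriv_eq_zero
    rwa [(hg t).deriv] at this
  -- strong convexity: `g'' t > 0`
  have hpos : 0 < g'' t := by
    have := hhess p hfr v hv h0
    rwa [iteratedFDeriv_two_apply, show (![v, v] : Fin 2 → EuclideanSpace ℝ (Fin N)) 0 = v from rfl,
      show (![v, v] : Fin 2 → EuclideanSpace ℝ (Fin N)) 1 = v from rfl] at this
  -- `g''` is continuous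
  have hccont : Continuous c := by
    apply Continuous.add
    · exact (continuous_const.sub continuous_id).smul continuous_const
    · exact continuous_id.smul continuous_const
  have hcont : Continuous g'' := by
    have h1 : Continuous fun s => fderiv ℝ (fderiv ℝ ρ) (c s) :=
      (hD.continuous_fderiv one_ne_zero).comp hccont
    exact (h1.clm_apply continuous_const).clm_apply continuous_const
  -- find δ with `g'' > 0` and staying in `(0,1)` on `(t-δ, t+δ)`
  have hev : ∀ᶠ s in nhds t, 0 < g'' s ∧ s ∈ Ioo (0:ℝ) 1 := by
    have h1 : ∀ᶠ s in nhds t, 0 < g'' s :=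
      (hcont.tendsto t).eventually (eventually_gt_nhds hpos)
    exact h1.and (Ioo_mem_nhds ht0 ht1)
  obtain ⟨δ, hδpos, hδ⟩ := Metric.eventually_nhds_iff.1 hev
  set s₁ : ℝ := t + δ / 2 with hs₁_def
  have hts₁ : t < s₁ := by simp [hs₁_def]; linarith
  have hs₁mem : 0 < g'' s₁ ∧ s₁ ∈ Ioo (0:ℝ) 1 := by
    apply hδ
    rw [Real.dist_eq]
    simp [hs₁_def]
    rw [abs_of_pos (by linarith)]
    linarith
  -- `g'` is strictly monotone on `[t, s₁]`
  have hmono : StrictMonoOn g' (Icc t s₁) := by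
    apply strictMonoOn_of_deriv_pos (convex_Icc t s₁)
    · exact fun x _ => (hg' x).continuousAt.continuousWithinAt
    · intro x hx
      rw [interior_Icc] at hx
      rw [(hg' x).deriv]
      refine (hδ ?_).1
      rw [Real.dist_eq, abs_of_pos (by linarith [hx.1])]
      have := hx.2
      simp only [hs₁_def] at this
      linarith
  -- mean value theorem on `[t, s₁]`
  obtain ⟨ξ, hξ, hξeq⟩ := exists_hasDerivAt_eq_slope g g' hts₁
    (fun x _ => (hg x).continuousAt.continuousWithinAt)
    (fun x _ => hg x)
  have hgs₁ : g s₁ ≤ 0 := by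
    apply hseg
    constructor
    · exact le_of_lt hs₁mem.2.1
    · exact le_of_lt hs₁mem.2.2
  have hslope : g' ξ ≤ 0 := by
    rw [hξeq, hgt]
    apply div_nonpos_of_nonpos_of_nonneg
    · linarith
    · linarith
  have : (0:ℝ) < g' ξ := by
    have := hmono (left_mem_Icc.2 (le_of_lt hts₁))
      ⟨le_of_lt hξ.1, le_of_lt hξ.2⟩ hξ.1
    rwa [h0] at this
  linarith

/-- Strong convexity (positive definite real Hessian of a defining function on
boundary tangent spaces) implies strict convexity: the open segment between any
two points of the closure lies in the domain. -/
theorem strongly_convex_implies_strictly_convex {N : ℕ}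
    (Ω : Set (EuclideanSpace ℝ (Fin N))) (hΩne : Ω.Nonempty)
    (hΩconn : IsConnected Ω) (hbd : Bornology.IsBounded Ω)
    (ρ : EuclideanSpace ℝ (Fin N) → ℝ) (hρ : ContDiff ℝ 2 ρ)
    (hΩdef : Ω = { x | ρ x < 0 })
    (hdρ : ∀ p ∈ frontier Ω, fderiv ℝ ρ p ≠ 0)
    (hhess : ∀ p ∈ frontier Ω, ∀ v : EuclideanSpace ℝ (Fin N), v ≠ 0 →
      fderiv ℝ ρ p v = 0 → 0 < iteratedFDeriv ℝ 2 ρ p ![v, v]) :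
    ∀ a ∈ closure Ω, ∀ b ∈ closure Ω, a ≠ b →
      ∀ t : ℝ, 0 < t → t < 1 → (1 - t) • a + t • b ∈ Ω := by
  have hopen : IsOpen Ω := by
    rw [hΩdef]; exact isOpen_lt hρ.continuous continuous_const
  have hsub : closure Ω ⊆ {x | ρ x ≤ 0} := by
    apply closure_minimal
    · rw [hΩdef]; exact fun x hx => le_of_lt (show ρ x < 0 from hx)
    · exact isClosed_le hρ.continuous continuous_const
  -- the set of pairs whose whole segment is inside Ω
  set A : Set (EuclideanSpace ℝ (Fin N) × EuclideanSpace ℝ (Fin N)) := {q | ∀ s ∈ Icc (0:ℝ) 1, (1 - s) • q.1 + s • q.2 ∈ Ω} with hA_def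
  have hF : ∀ s : ℝ, Continuous fun q : EuclideanSpace ℝ (Fin N) × EuclideanSpace ℝ (Fin N) => (1 - s) • q.1 + s • q.2 := fun s =>
    (continuous_fst.const_smul (1 - s)).add (continuous_snd.const_smul s)
  -- A is open (generalized tube lemma)
  have hAopen : IsOpen A := by
    rw [isOpen_iff_mem_nhds]
    intro q hq
    have hGcont : Continuous fun z : (EuclideanSpace ℝ (Fin N) × EuclideanSpace ℝ (Fin N)) × ℝ => (1 - z.2) • z.1.1 + z.2 • z.1.2 := by
      apply Continuous.add
      · exact ((continuous_const.sub continuous_snd).smul (continuous_fst.fst))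
      · exact continuous_snd.smul continuous_fst.snd
    have hn : IsOpen ((fun z : (EuclideanSpace ℝ (Fin N) × EuclideanSpace ℝ (Fin N)) × ℝ => (1 - z.2) • z.1.1 + z.2 • z.1.2) ⁻¹' Ω) :=
      hopen.preimage hGcont
    have hp : ({q} : Set (EuclideanSpace ℝ (Fin N) × EuclideanSpace ℝ (Fin N))) ×ˢ Icc (0:ℝ) 1 ⊆
        (fun z : (EuclideanSpace ℝ (Fin N) × EuclideanSpace ℝ (Fin N)) × ℝ => (1 - z.2) • z.1.1 + z.2 • z.1.2) ⁻¹' Ω := by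
      rintro ⟨q', s⟩ ⟨hq', hs⟩
      simp only [mem_singleton_iff] at hq'
      subst hq'
      exact hq s hs
    obtain ⟨u, w, hu, _, hqu, hKw, huw⟩ :=
      generalized_tube_lemma isCompact_singleton isCompact_Icc hn hp
    apply Filter.mem_of_superset (hu.mem_nhds (hqu rfl))
    intro q' hq' s hs
    exact huw (Set.mk_mem_prod hq' (hKw hs))
  -- A is relatively closed in Ω ×ˢ Ω
  have hAcl : (Ω ×ˢ Ω) ∩ closure A ⊆ A := by
    rintro ⟨x, y⟩ ⟨⟨hx, hy⟩, hcl⟩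
    -- the whole segment is in the closure of Ω
    have hsegcl : ∀ s ∈ Icc (0:ℝ) 1, (1 - s) • x + s • y ∈ closure Ω := by
      intro s hs
      have h1 : A ⊆ (fun q : EuclideanSpace ℝ (Fin N) × EuclideanSpace ℝ (Fin N) => (1 - s) • q.1 + s • q.2) ⁻¹' closure Ω :=
        fun q hq => subset_closure (hq s hs)
      have h2 : closure A ⊆ (fun q : EuclideanSpace ℝ (Fin N) × EuclideanSpace ℝ (Fin N) => (1 - s) • q.1 + s • q.2) ⁻¹' closure Ω :=
        closure_minimal h1 (isClosed_closure.preimage (hF s))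
      exact h2 hcl
    intro s hs
    by_contra hnot
    -- s is interior, x ≠ y, the point is on the frontier
    have hs0 : s ≠ 0 := by
      rintro rfl
      apply hnot
      simpa using hx
    have hs1 : s ≠ 1 := by
      rintro rfl
      apply hnot
      simpa using hy
    have hxy : x ≠ y := by
      rintro rfl
      apply hnot
      have : (1 - s) • x + s • x = x := by
        rw [← add_smul]; simp
      rwa [this]
    have hfr : (1 - s) • x + s • y ∈ frontier Ω := by
      rw [hopen.frontier_eq]
      exact ⟨hsegcl s hs, hnot⟩
    exact key_no_frontier_touch hρ hΩdef hhess hxy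
      (lt_of_le_of_ne hs.1 (Ne.symm hs0)) (lt_of_le_of_ne hs.2 hs1)
      (fun u hu => hsub (hsegcl u hu)) hfr
  -- connectedness: Ω ×ˢ Ω ⊆ A
  have hSconn : IsPreconnected (Ω ×ˢ Ω) := (hΩconn.prod hΩconn).isPreconnected
  obtain ⟨x₀, hx₀⟩ := hΩne
  have hdiag : ((x₀, x₀) : EuclideanSpace ℝ (Fin N) × EuclideanSpace ℝ (Fin N)) ∈ (Ω ×ˢ Ω) ∩ A := by
    refine ⟨⟨hx₀, hx₀⟩, fun s _ => ?_⟩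
    have : (1 - s) • x₀ + s • x₀ = x₀ := by
      rw [← add_smul]; simp
    rwa [this]
  have hSA : Ω ×ˢ Ω ⊆ A := by
    rcases eq_empty_or_nonempty ((Ω ×ˢ Ω) ∩ (closure A)ᶜ) with hemp | hne
    · intro q hq
      apply hAcl
      refine ⟨hq, ?_⟩
      by_contra hq'
      have : q ∈ Ω ×ˢ Ω ∩ (closure A)ᶜ := ⟨hq, hq'⟩
      rw [hemp] at this
      exact this
    · exfalso
      have hcover : Ω ×ˢ Ω ⊆ A ∪ (closure A)ᶜ := by
        intro q hq
        by_cases h : q ∈ closure A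
        · exact Or.inl (hAcl ⟨hq, h⟩)
        · exact Or.inr h
      obtain ⟨r, hr⟩ := hSconn A (closure A)ᶜ hAopen isClosed_closure.isOpen_compl hcover
        ⟨(x₀, x₀), hdiag.1, hdiag.2⟩ hne
      exact hr.2.2 (subset_closure hr.2.1)
  -- Ω is convex
  have hconv : Convex ℝ Ω := by
    intro x hx y hy α β hα hβ hαβ
    have hβ1 : β ≤ 1 := by linarith
    have := hSA (show ((x, y) : EuclideanSpace ℝ (Fin N) × EuclideanSpace ℝ (Fin N)) ∈ Ω ×ˢ Ω from ⟨hx, hy⟩) β ⟨hβ, hβ1⟩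
    have hα' : α = 1 - β := by linarith
    rwa [hα']
  have hclconv : Convex ℝ (closure Ω) := hconv.closure
  -- conclude
  intro a ha b hb hab t ht0 ht1
  have hsegcl : ∀ s ∈ Icc (0:ℝ) 1, (1 - s) • a + s • b ∈ closure Ω := by
    intro s hs
    exact hclconv ha hb (by linarith [hs.2] : (0:ℝ) ≤ 1 - s) hs.1 (by ring)
  by_contra hnot
  have hfr : (1 - t) • a + t • b ∈ frontier Ω := by
    rw [hopen.frontier_eq]
    exact ⟨hsegcl t ⟨le_of_lt ht0, le_of_lt ht1⟩, hnot⟩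
  exact key_no_frontier_touch hρ hΩdef hhess hab ht0 ht1
    (fun u hu => hsub (hsegcl u hu)) hfr
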